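/- Suppose y : [0,∞) → ℝ and z : [0,∞) → ℝ both solve the linear problem Ly = f with L y = y' + λ(1+γ∂_t^α)y and y(0) = z(0) = y₀, where ∂_t^α is the Riemann–Liouville derivative of order α ∈ (0,1), and both y, z are continuously differentiable with ∂_t^α y, ∂_t^α z continuous. Then y = z on [0,∞). -/

import Mathlib

open Real MeasureTheory intervalIntegral

noncomputable def rlDeriv (α : ℝ) (h : ℝ → ℝ) (t : ℝ) : ℝ :=
  deriv (fun s => (1 / Real.Gamma (1 - α)) * ∫ τ in (0:ℝ)..s, (s - τ) ^ (-α) * h τ) t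

open Set

section Helpers

variable {α : ℝ} (hα : 0 < α) (hα1 : α < 1)

/-- kernel integral value -/
lemma ker_integral (hα : 0 < α) (hα1 : α < 1) {a b : ℝ} (hab : a ≤ b) :
    (∫ τ in a..b, (b - τ) ^ (-α)) = (b - a) ^ (1 - α) / (1 - α) := by
  have h1 : (∫ τ in a..b, (b - τ) ^ (-α)) = ∫ x in (b - b)..(b - a), x ^ (-α) :=
    intervalIntegral.integral_comp_sub_left (fun x => x ^ (-α)) b
  rw [h1, sub_self]
  rw [integral_rpow (Or.inl (by linarith))]
  rw [Real.zero_rpow (by linarith)]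
  ring_nf

/-- kernel interval integrability -/
lemma ker_intervalIntegrable (hα : 0 < α) (hα1 : α < 1) {a b : ℝ} (hab : a ≤ b) :
    IntervalIntegrable (fun τ => (b - τ) ^ (-α)) volume a b := by
  have h : IntervalIntegrable (fun x : ℝ => x ^ (-α)) volume (b - b) (b - a) :=
    intervalIntegrable_rpow' (by linarith)
  have := h.comp_sub_left b
  simpa using this.symm

end Helpers
section Helpers2

variable {α : ℝ}

lemma ker_measurable (α b : ℝ) : Measurable (fun r : ℝ => (b - r) ^ (-α)) := by fun_prop

lemma ker_mul_intervalIntegrable (hα : 0 < α) (hα1 : α < 1) {a b : ℝ} (hab : a ≤ b)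
    {g : ℝ → ℝ} (hg : ContinuousOn g (Icc a b)) :
    IntervalIntegrable (fun r => (b - r) ^ (-α) * g r) volume a b := by
  rw [intervalIntegrable_iff_integrableOn_Ioc_of_le hab]
  obtain ⟨C, hC⟩ := isCompact_Icc.exists_bound_of_continuousOn hg
  have hker : IntegrableOn (fun r => (b - r) ^ (-α)) (Ioc a b) volume := by
    rw [← intervalIntegrable_iff_integrableOn_Ioc_of_le hab]
    exact ker_intervalIntegrable hα hα1 hab
  refine Integrable.mono' (hker.const_mul C) ?_ ?_
  · exact ((ker_measurable α b).aestronglyMeasurable).mul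
      ((hg.mono Ioc_subset_Icc_self).aestronglyMeasurable measurableSet_Ioc)
  · filter_upwards [ae_restrict_mem measurableSet_Ioc] with r hr
    have h1 : (0:ℝ) ≤ (b - r) ^ (-α) := Real.rpow_nonneg (by linarith [hr.2]) _
    have h2 : |g r| ≤ C := hC r (Ioc_subset_Icc_self hr)
    calc ‖(b - r) ^ (-α) * g r‖ = (b - r) ^ (-α) * |g r| := by
          rw [norm_mul, Real.norm_eq_abs, Real.norm_eq_abs, abs_of_nonneg h1]
      _ ≤ (b - r) ^ (-α) * C := by
          exact mul_le_mul_of_nonneg_left h2 h1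
      _ = C * (b - r) ^ (-α) := mul_comm _ _

lemma ker_mul_norm_le (hα : 0 < α) (hα1 : α < 1) {a b C : ℝ} {g : ℝ → ℝ} (hab : a ≤ b) (hC0 : 0 ≤ C)
    (hC : ∀ r ∈ Set.Ioc a b, |g r| ≤ C) :
    |∫ r in a..b, (b - r) ^ (-α) * g r| ≤ C * ((b - a) ^ (1 - α) / (1 - α)) := by
  have hbd : IntervalIntegrable (fun r => (b - r) ^ (-α) * C) volume a b :=
    (ker_intervalIntegrable hα hα1 hab).mul_const C
  have h := intervalIntegral.norm_integral_le_of_norm_le (μ := volume)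
      (f := fun r => (b - r) ^ (-α) * g r) (g := fun r => (b - r) ^ (-α) * C)
      hab ?_ hbd
  · rw [Real.norm_eq_abs] at h
    refine h.trans ?_
    rw [intervalIntegral.integral_mul_const, ker_integral hα hα1 hab]
    exact (mul_comm _ _).le
  · have : Set.uIoc a b = Set.Ioc a b := Set.uIoc_of_le hab
    filter_upwards with r hr
    have h1 : (0:ℝ) ≤ (b - r) ^ (-α) := Real.rpow_nonneg (by linarith [hr.2]) _
    calc ‖(b - r) ^ (-α) * g r‖ = (b - r) ^ (-α) * |g r| := by
          rw [norm_mul, Real.norm_eq_abs, Real.norm_eq_abs, abs_of_nonneg h1]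
      _ ≤ (b - r) ^ (-α) * C := mul_le_mul_of_nonneg_left (hC r hr) h1

end Helpers2
section QCont

variable {α : ℝ}

lemma Q_eq (α : ℝ) (g : ℝ → ℝ) (p : ℝ) :
    (∫ r in (0:ℝ)..p, (p - r) ^ (-α) * g r) = ∫ x in (0:ℝ)..p, x ^ (-α) * g (p - x) := by
  have h := intervalIntegral.integral_comp_sub_left (a := 0) (b := p) (fun x => x ^ (-α) * g (p - x)) p
  simp only [sub_sub_cancel, sub_self, sub_zero] at h
  exact h

lemma Q_cont (hα : 0 < α) (hα1 : α < 1) {g : ℝ → ℝ} (hgm : Measurable g)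
    (hgc : ContinuousOn g (Set.Ici 0)) {t : ℝ} (ht : 0 < t) :
    ContinuousAt (fun p => ∫ x in (0:ℝ)..p, x ^ (-α) * g (p - x)) t := by
  set μ : Measure ℝ := volume.restrict (Set.Ioc 0 (t + 1)) with hμ
  obtain ⟨C, hC⟩ := isCompact_Icc.exists_bound_of_continuousOn
    (hgc.mono (Set.Icc_subset_Ici_self : Set.Icc (0:ℝ) (t + 1) ⊆ Set.Ici 0))
  have hC0 : 0 ≤ C := le_trans (abs_nonneg _) (by
    simpa using hC 0 (Set.mem_Icc.2 ⟨le_refl _, by linarith⟩))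
  set F : ℝ → ℝ → ℝ := fun p x => (Set.Ioc (0:ℝ) p).indicator (fun x => x ^ (-α) * g (p - x)) x
    with hF
  have hmem : Set.Ioo (0:ℝ) (t+1) ∈ nhds t := Ioo_mem_nhds ht (by linarith)
  have key : ContinuousAt (fun p => ∫ x, F p x ∂μ) t := by
    apply continuousAt_of_dominated (bound := fun x => x ^ (-α) * C)
    · filter_upwards with p
      refine (Measurable.indicator ?_ measurableSet_Ioc).aestronglyMeasurable
      fun_prop
    · filter_upwards [hmem] with p hp
      filter_upwards [ae_restrict_mem measurableSet_Ioc] with x hx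
      by_cases hxp : x ∈ Set.Ioc (0:ℝ) p
      · rw [hF]; simp only [Set.indicator_of_mem hxp]
        have h1 : (0:ℝ) ≤ x ^ (-α) := Real.rpow_nonneg (le_of_lt hx.1) _
        rw [norm_mul, Real.norm_eq_abs, Real.norm_eq_abs, abs_of_nonneg h1]
        refine mul_le_mul_of_nonneg_left ?_ h1
        exact hC (p - x) (Set.mem_Icc.2 ⟨by linarith [hxp.2], by linarith [hp.2, hx.1]⟩)
      · rw [hF]; simp only [Set.indicator_of_notMem hxp, norm_zero]
        exact mul_nonneg (Real.rpow_nonneg (le_of_lt hx.1) _) hC0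
    · have hii : IntervalIntegrable (fun x : ℝ => x ^ (-α) * C) volume 0 (t+1) :=
        (intervalIntegrable_rpow' (by linarith)).mul_const C
      rw [intervalIntegrable_iff_integrableOn_Ioc_of_le (by linarith : (0:ℝ) ≤ t + 1)] at hii
      exact hii
    · have hne : ∀ᵐ x ∂μ, x ≠ t := by
        apply ae_restrict_of_ae
        rw [ae_iff]
        simp only [not_ne_iff, Set.setOf_eq_eq_singleton]
        exact Real.volume_singleton
      filter_upwards [ae_restrict_mem measurableSet_Ioc, hne] with x hx hxt
      rcases lt_or_gt_of_ne hxt with hlt | hgt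
      · have hev : ∀ᶠ p in nhds t, F p x = x ^ (-α) * g (p - x) := by
          filter_upwards [Ioi_mem_nhds hlt] with p hp
          exact Set.indicator_of_mem (Set.mem_Ioc.mpr ⟨hx.1, le_of_lt hp⟩) _
        have hca : ContinuousAt (fun p => x ^ (-α) * g (p - x)) t := by
          refine continuousAt_const.mul ?_
          have : ContinuousAt g (t - x) :=
            hgc.continuousAt (Ici_mem_nhds (by linarith))
          exact ContinuousAt.comp this ((continuous_sub_right x).continuousAt)
        exact hca.congr (Filter.eventuallyEq_of_mem (Ioi_mem_nhds hlt)
          (fun p hp => (Set.indicator_of_mem (Set.mem_Ioc.mpr ⟨hx.1, le_of_lt hp⟩) (fun x => x ^ (-α) * g (p - x))).symm))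
      · refine (continuousAt_const (y := (0:ℝ))).congr ?_
        filter_upwards [Iio_mem_nhds hgt] with p hp
        exact (Set.indicator_of_notMem (fun hmem' => absurd hmem'.2 (not_le.2 hp)) (fun x => x ^ (-α) * g (p - x))).symm
  refine key.congr ?_
  filter_upwards [hmem] with p hp
  have h0p : (0:ℝ) ≤ p := le_of_lt hp.1
  rw [hμ, setIntegral_indicator measurableSet_Ioc,
    Set.inter_eq_right.2 (Set.Ioc_subset_Ioc_right (le_of_lt hp.2)),
    intervalIntegral.integral_of_le h0p]
section Fubini

variable {α : ℝ}

lemma fubini_step (hα : 0 < α) (hα1 : α < 1) {g : ℝ → ℝ} (hgm : Measurable g)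
    (hgc : ContinuousOn g (Set.Ici 0)) {s : ℝ} (hs : 0 < s) :
    (∫ x in (0:ℝ)..s, x ^ (-α) * (∫ p in x..s, g (p - x)))
      = ∫ p in (0:ℝ)..s, ∫ x in (0:ℝ)..p, x ^ (-α) * g (p - x) := by
  obtain ⟨C, hC⟩ := isCompact_Icc.exists_bound_of_continuousOn
    (hgc.mono (Set.Icc_subset_Ici_self : Set.Icc (0:ℝ) s ⊆ Set.Ici 0))
  have hC0 : 0 ≤ C := le_trans (norm_nonneg _) (hC 0 (Set.mem_Icc.2 ⟨le_refl _, hs.le⟩))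
  set T : Set (ℝ × ℝ) := {q | 0 < q.1 ∧ q.1 < q.2 ∧ q.2 ≤ s} with hT
  have hTm : MeasurableSet T := by
    apply MeasurableSet.inter (measurableSet_lt measurable_const measurable_fst)
    exact MeasurableSet.inter (measurableSet_lt measurable_fst measurable_snd)
      (measurableSet_le measurable_snd measurable_const)
  set Φ : ℝ × ℝ → ℝ := T.indicator (fun q => q.1 ^ (-α) * g (q.2 - q.1)) with hΦ
  have hΦm : Measurable Φ := by
    refine Measurable.indicator ?_ hTm
    fun_prop
  -- integrable bound
  have hker : IntegrableOn (fun x : ℝ => C * x ^ (-α)) (Set.Ioc 0 s) volume := by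
    have hii : IntervalIntegrable (fun x : ℝ => C * x ^ (-α)) volume 0 s :=
      (intervalIntegrable_rpow' (by linarith)).const_mul C
    rwa [intervalIntegrable_iff_integrableOn_Ioc_of_le hs.le] at hii
  have h1 : Integrable ((Set.Ioc (0:ℝ) s).indicator fun x => C * x ^ (-α)) volume :=
    hker.integrable_indicator measurableSet_Ioc
  have h2 : Integrable ((Set.Ioc (0:ℝ) s).indicator fun _ => (1:ℝ)) volume :=
    (integrableOn_const (by simp)).integrable_indicator measurableSet_Ioc
  have hbnd : Integrable (fun q : ℝ × ℝ =>
      ((Set.Ioc (0:ℝ) s).indicator (fun x => C * x ^ (-α)) q.1) *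
      ((Set.Ioc (0:ℝ) s).indicator (fun _ => (1:ℝ)) q.2)) (volume.prod volume) :=
    h1.mul_prod h2
  have hbnd_nonneg : ∀ q : ℝ × ℝ, 0 ≤
      ((Set.Ioc (0:ℝ) s).indicator (fun x => C * x ^ (-α)) q.1) *
      ((Set.Ioc (0:ℝ) s).indicator (fun _ => (1:ℝ)) q.2) := by
    intro q
    apply mul_nonneg
    · apply Set.indicator_nonneg
      intro x hx
      exact mul_nonneg hC0 (Real.rpow_nonneg hx.1.le _)
    · apply Set.indicator_nonneg; intro x _; norm_num
  have hint : Integrable Φ (volume.prod volume) := by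
    refine Integrable.mono' hbnd hΦm.aestronglyMeasurable ?_
    filter_upwards with q
    by_cases hq : q ∈ T
    · rw [hΦ, Set.indicator_of_mem hq]
      obtain ⟨hq1, hq2, hq3⟩ := hq
      have hx1 : q.1 ∈ Set.Ioc (0:ℝ) s := ⟨hq1, by linarith⟩
      have hx2 : q.2 ∈ Set.Ioc (0:ℝ) s := ⟨by linarith, hq3⟩
      rw [Set.indicator_of_mem hx1, Set.indicator_of_mem hx2]
      have h1' : (0:ℝ) ≤ q.1 ^ (-α) := Real.rpow_nonneg hq1.le _
      rw [norm_mul, Real.norm_eq_abs, Real.norm_eq_abs, abs_of_nonneg h1', mul_one]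
      calc q.1 ^ (-α) * |g (q.2 - q.1)| ≤ q.1 ^ (-α) * C := by
            refine mul_le_mul_of_nonneg_left ?_ h1'
            have := hC (q.2 - q.1) (Set.mem_Icc.2 ⟨by linarith, by linarith⟩)
            rwa [Real.norm_eq_abs] at this
        _ = C * q.1 ^ (-α) := mul_comm _ _
    · rw [hΦ, Set.indicator_of_notMem hq, norm_zero]
      exact hbnd_nonneg q
  -- swap
  have hswap := MeasureTheory.integral_integral_swap
    (f := fun x p => Φ (x, p)) (μ := volume) (ν := volume) (by exact hint)
  -- evaluate left side of swap
  have hLeft : (∫ x : ℝ, ∫ p : ℝ, Φ (x, p)) =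
      ∫ x in (0:ℝ)..s, x ^ (-α) * (∫ p in x..s, g (p - x)) := by
    have hfun : (fun x : ℝ => ∫ p : ℝ, Φ (x, p)) =
        (Set.Ioc (0:ℝ) s).indicator (fun x => x ^ (-α) * ∫ p in x..s, g (p - x)) := by
      funext x
      by_cases hx : x ∈ Set.Ioc (0:ℝ) s
      · rw [Set.indicator_of_mem hx]
        have hΦx : (fun p : ℝ => Φ (x, p)) =
            (Set.Ioc x s).indicator (fun p => x ^ (-α) * g (p - x)) := by
          funext p
          by_cases hp : p ∈ Set.Ioc x s
          · rw [Set.indicator_of_mem hp, hΦ,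
              Set.indicator_of_mem (show (x,p) ∈ T from ⟨hx.1, hp.1, hp.2⟩)]
          · rw [Set.indicator_of_notMem hp, hΦ, Set.indicator_of_notMem]
            intro hmem
            exact hp ⟨hmem.2.1, hmem.2.2⟩
        rw [hΦx, MeasureTheory.integral_indicator measurableSet_Ioc,
          ← intervalIntegral.integral_of_le hx.2, intervalIntegral.integral_const_mul]
      · have hΦx : (fun p : ℝ => Φ (x, p)) = fun _ => (0:ℝ) := by
          funext p
          rw [hΦ, Set.indicator_of_notMem]
          intro hmem
          exact hx ⟨hmem.1, le_of_lt (lt_of_lt_of_le hmem.2.1 hmem.2.2)⟩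
        rw [Set.indicator_of_notMem hx, hΦx]
        simp
    rw [hfun, MeasureTheory.integral_indicator measurableSet_Ioc,
      ← intervalIntegral.integral_of_le hs.le]
  -- evaluate right side of swap
  have hRight : (∫ p : ℝ, ∫ x : ℝ, Φ (x, p)) =
      ∫ p in (0:ℝ)..s, ∫ x in (0:ℝ)..p, x ^ (-α) * g (p - x) := by
    have hfun : (fun p : ℝ => ∫ x : ℝ, Φ (x, p)) =
        (Set.Ioc (0:ℝ) s).indicator (fun p => ∫ x in (0:ℝ)..p, x ^ (-α) * g (p - x)) := by
      funext p
      by_cases hp : p ∈ Set.Ioc (0:ℝ) s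
      · rw [Set.indicator_of_mem hp]
        have hΦp : (fun x : ℝ => Φ (x, p)) =
            (Set.Ioo (0:ℝ) p).indicator (fun x => x ^ (-α) * g (p - x)) := by
          funext x
          by_cases hx : x ∈ Set.Ioo (0:ℝ) p
          · rw [Set.indicator_of_mem hx, hΦ,
              Set.indicator_of_mem (show (x,p) ∈ T from ⟨hx.1, hx.2, hp.2⟩)]
          · rw [Set.indicator_of_notMem hx, hΦ, Set.indicator_of_notMem]
            intro hmem
            exact hx ⟨hmem.1, hmem.2.1⟩
        rw [hΦp, MeasureTheory.integral_indicator measurableSet_Ioo,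
          ← MeasureTheory.integral_Ioc_eq_integral_Ioo,
          ← intervalIntegral.integral_of_le hp.1.le]
      · have hΦp : (fun x : ℝ => Φ (x, p)) = fun _ => (0:ℝ) := by
          funext x
          rw [hΦ, Set.indicator_of_notMem]
          intro hmem
          exact hp ⟨lt_trans hmem.1 hmem.2.1, hmem.2.2⟩
        rw [Set.indicator_of_notMem hp, hΦp]
        simp
    rw [hfun, MeasureTheory.integral_indicator measurableSet_Ioc,
      ← intervalIntegral.integral_of_le hs.le]
  rw [← hLeft, ← hRight]
  exact hswap

end Fubini
section Star

variable {α : ℝ}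

lemma ker0_mul_intervalIntegrable (hα : 0 < α) (hα1 : α < 1) {b : ℝ} (hb : 0 ≤ b)
    {g : ℝ → ℝ} (hg : ContinuousOn g (Set.Icc 0 b)) :
    IntervalIntegrable (fun x => x ^ (-α) * g x) volume 0 b := by
  rw [intervalIntegrable_iff_integrableOn_Ioc_of_le hb]
  obtain ⟨C, hC⟩ := isCompact_Icc.exists_bound_of_continuousOn hg
  have hker : IntegrableOn (fun x : ℝ => x ^ (-α)) (Set.Ioc 0 b) volume := by
    have hii : IntervalIntegrable (fun x : ℝ => x ^ (-α)) volume 0 b :=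
      intervalIntegrable_rpow' (by linarith)
    rwa [intervalIntegrable_iff_integrableOn_Ioc_of_le hb] at hii
  refine Integrable.mono' (hker.const_mul C) ?_ ?_
  · exact ((by fun_prop : Measurable fun x : ℝ => x ^ (-α)).aestronglyMeasurable).mul
      ((hg.mono Set.Ioc_subset_Icc_self).aestronglyMeasurable measurableSet_Ioc)
  · filter_upwards [ae_restrict_mem measurableSet_Ioc] with r hr
    have h1 : (0:ℝ) ≤ r ^ (-α) := Real.rpow_nonneg hr.1.le _
    calc ‖r ^ (-α) * g r‖ = r ^ (-α) * ‖g r‖ := by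
          rw [norm_mul, Real.norm_eq_abs (r ^ (-α)), abs_of_nonneg h1]
      _ ≤ r ^ (-α) * C := mul_le_mul_of_nonneg_left (hC r (Set.Ioc_subset_Icc_self hr)) h1
      _ = C * r ^ (-α) := mul_comm _ _

lemma star_identity (hα : 0 < α) (hα1 : α < 1) {h : ℝ → ℝ}
    (hdiff : ∀ t ≥ (0:ℝ), DifferentiableAt ℝ h t)
    (hdc : ContinuousOn (deriv h) (Set.Ici 0)) {s : ℝ} (hs : 0 < s) :
    (∫ τ in (0:ℝ)..s, (s - τ) ^ (-α) * h τ)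
      = h 0 * s ^ (1 - α) / (1 - α)
        + ∫ p in (0:ℝ)..s, ∫ r in (0:ℝ)..p, (p - r) ^ (-α) * deriv h r := by
  set g := deriv h with hg
  have hgm : Measurable g := measurable_deriv h
  have hhc : ContinuousOn h (Set.Ici 0) := fun x hx =>
    ((hdiff x hx).continuousAt).continuousWithinAt
  -- FTC for h
  have ftc : ∀ x ∈ Set.Icc (0:ℝ) s, (∫ p in x..s, g (p - x)) = h (s - x) - h 0 := by
    intro x hx
    have hsub : (∫ p in x..s, g (p - x)) = ∫ r in (0:ℝ)..(s - x), g r := by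
      have := intervalIntegral.integral_comp_sub_right (a := x) (b := s) g x
      simpa using this
    rw [hsub]
    refine intervalIntegral.integral_eq_sub_of_hasDerivAt (fun r hr => ?_) ?_
    · rw [Set.uIcc_of_le (by linarith [hx.2] : (0:ℝ) ≤ s - x)] at hr
      exact (hdiff r hr.1).hasDerivAt
    · apply ContinuousOn.intervalIntegrable
      rw [Set.uIcc_of_le (by linarith [hx.2] : (0:ℝ) ≤ s - x)]
      exact hdc.mono (fun r hr => hr.1)
  -- continuity of the difference
  have hGc : ContinuousOn (fun x => h (s - x) - h 0) (Set.Icc 0 s) := by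
    refine ContinuousOn.sub ?_ continuousOn_const
    refine ContinuousOn.comp hhc ((continuous_const.sub continuous_id).continuousOn) ?_
    intro x hx
    simp only [Set.mem_Ici]
    linarith [hx.2]
  have int1 : IntervalIntegrable (fun x : ℝ => x ^ (-α) * h 0) volume 0 s :=
    (intervalIntegrable_rpow' (by linarith)).mul_const _
  have int2 : IntervalIntegrable (fun x : ℝ => x ^ (-α) * (h (s - x) - h 0)) volume 0 s :=
    ker0_mul_intervalIntegrable hα hα1 hs.le hGc
  -- main chain
  have huIcc : Set.uIcc (0:ℝ) s = Set.Icc 0 s := Set.uIcc_of_le hs.le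
  calc (∫ τ in (0:ℝ)..s, (s - τ) ^ (-α) * h τ)
      = ∫ x in (0:ℝ)..s, x ^ (-α) * h (s - x) := Q_eq α h s
    _ = ∫ x in (0:ℝ)..s, (x ^ (-α) * h 0 + x ^ (-α) * (h (s - x) - h 0)) := by
        apply intervalIntegral.integral_congr
        intro x _
        ring
    _ = (∫ x in (0:ℝ)..s, x ^ (-α) * h 0)
        + ∫ x in (0:ℝ)..s, x ^ (-α) * (h (s - x) - h 0) :=
        intervalIntegral.integral_add int1 int2
    _ = h 0 * s ^ (1 - α) / (1 - α)
        + ∫ p in (0:ℝ)..s, ∫ r in (0:ℝ)..p, (p - r) ^ (-α) * g r := by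
        congr 1
        · rw [intervalIntegral.integral_mul_const,
            integral_rpow (Or.inl (by linarith : (-1:ℝ) < -α)),
            show (-α + 1 : ℝ) = 1 - α from by ring,
            Real.zero_rpow (by linarith : (1:ℝ) - α ≠ 0)]
          ring
        · have e1 : (∫ x in (0:ℝ)..s, x ^ (-α) * (h (s - x) - h 0))
              = ∫ x in (0:ℝ)..s, x ^ (-α) * (∫ p in x..s, g (p - x)) := by
            apply intervalIntegral.integral_congr
            intro x hx
            rw [huIcc] at hx
            show x ^ (-α) * (h (s - x) - h 0) = x ^ (-α) * ∫ p in x..s, g (p - x)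
            rw [ftc x hx]
          rw [e1, fubini_step hα hα1 hgm hdc hs]
          apply intervalIntegral.integral_congr
          intro p _
          exact (Q_eq α g p).symm

end Star
section RLFormula

variable {α : ℝ}

lemma rlDeriv_eq (hα : 0 < α) (hα1 : α < 1) {h : ℝ → ℝ}
    (hdiff : ∀ t ≥ (0:ℝ), DifferentiableAt ℝ h t)
    (hdc : ContinuousOn (deriv h) (Set.Ici 0)) {t : ℝ} (ht : 0 < t) :
    rlDeriv α h t = (1 / Real.Gamma (1 - α)) *
      (h 0 * t ^ (-α) + ∫ r in (0:ℝ)..t, (t - r) ^ (-α) * deriv h r) := by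
  set g := deriv h with hgdef
  have hgm : Measurable g := measurable_deriv h
  set Q : ℝ → ℝ := fun p => ∫ r in (0:ℝ)..p, (p - r) ^ (-α) * g r with hQ
  have hQc : ∀ p ∈ Set.Ioi (0:ℝ), ContinuousAt Q p := by
    intro p hp
    have h2 := Q_cont hα hα1 hgm hdc hp
    refine h2.congr ?_
    filter_upwards with p'
    exact (Q_eq α g p').symm
  -- interval integrability of Q on [0, t]
  obtain ⟨C, hC⟩ := isCompact_Icc.exists_bound_of_continuousOn
    (hdc.mono (Set.Icc_subset_Ici_self : Set.Icc (0:ℝ) t ⊆ Set.Ici 0))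
  have hC0 : 0 ≤ C := le_trans (norm_nonneg _) (hC 0 (Set.mem_Icc.2 ⟨le_refl _, ht.le⟩))
  have hQbound : ∀ p ∈ Set.Ioc (0:ℝ) t, |Q p| ≤ C * (t ^ (1 - α) / (1 - α)) := by
    intro p hp
    have h1 : |Q p| ≤ C * ((p - 0) ^ (1 - α) / (1 - α)) := by
      refine ker_mul_norm_le hα hα1 hp.1.le hC0 ?_
      intro r hr
      have h3 := hC r ⟨hr.1.le, le_trans hr.2 hp.2⟩
      rwa [Real.norm_eq_abs] at h3
    refine h1.trans (mul_le_mul_of_nonneg_left ?_ hC0)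
    rw [sub_zero]
    exact (div_le_div_iff_of_pos_right (by linarith)).mpr
      (Real.rpow_le_rpow hp.1.le hp.2 (by linarith))
  have hQint : IntervalIntegrable Q volume 0 t := by
    rw [intervalIntegrable_iff_integrableOn_Ioc_of_le ht.le]
    refine Integrable.mono' (g := fun _ => C * (t ^ (1 - α) / (1 - α)))
      (integrableOn_const measure_Ioc_lt_top.ne) ?_ ?_
    · refine ContinuousOn.aestronglyMeasurable ?_ measurableSet_Ioc
      intro p hp
      exact (hQc p hp.1).continuousWithinAt
    · filter_upwards [ae_restrict_mem measurableSet_Ioc] with p hp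
      rw [Real.norm_eq_abs]
      exact hQbound p hp
  have hQmeas : StronglyMeasurableAtFilter Q (nhds t) volume := by
    refine AEStronglyMeasurable.stronglyMeasurableAtFilter_of_mem (s := Set.Ioi (0:ℝ))
      ?_ (Ioi_mem_nhds ht)
    refine ContinuousOn.aestronglyMeasurable ?_ measurableSet_Ioi
    intro p hp
    exact (hQc p hp).continuousWithinAt
  have hR2 : HasDerivAt (fun s => ∫ p in (0:ℝ)..s, Q p) (Q t) t :=
    intervalIntegral.integral_hasDerivAt_right hQint hQmeas (hQc t ht)
  have hR1 : HasDerivAt (fun s : ℝ => h 0 * s ^ (1 - α) / (1 - α)) (h 0 * t ^ (-α)) t := by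
    have h4 := ((Real.hasStrictDerivAt_rpow_const_of_ne ht.ne' (1 - α)).hasDerivAt.const_mul
      (h 0)).div_const (1 - α)
    refine h4.congr_deriv ?_
    rw [show (1 - α - 1 : ℝ) = -α from by ring]
    have hne : (1 - α : ℝ) ≠ 0 := by linarith
    field_simp
  have hR : HasDerivAt (fun s : ℝ => h 0 * s ^ (1 - α) / (1 - α) + ∫ p in (0:ℝ)..s, Q p)
      (h 0 * t ^ (-α) + Q t) t := hR1.add hR2
  have hA : HasDerivAt (fun s : ℝ => ∫ τ in (0:ℝ)..s, (s - τ) ^ (-α) * h τ)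
      (h 0 * t ^ (-α) + Q t) t := by
    refine hR.congr_of_eventuallyEq ?_
    filter_upwards [Ioi_mem_nhds ht] with s hs
    exact star_identity hα hα1 hdiff hdc hs
  have hfinal := (hA.const_mul (1 / Real.Gamma (1 - α))).deriv
  rw [rlDeriv]
  exact hfinal

end RLFormula
theorem stmt_18 (α γ lam y₀ : ℝ) (hα : 0 < α) (hα1 : α < 1)
    (hγ : 0 < γ) (hlam : 0 < lam)
    (f y z : ℝ → ℝ)
    (hy_diff : ∀ t ≥ (0:ℝ), DifferentiableAt ℝ y t)
    (hz_diff : ∀ t ≥ (0:ℝ), DifferentiableAt ℝ z t)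
    (hy'_cont : ContinuousOn (deriv y) (Set.Ici 0))
    (hz'_cont : ContinuousOn (deriv z) (Set.Ici 0))
    (hyα_cont : ContinuousOn (rlDeriv α y) (Set.Ici 0))
    (hzα_cont : ContinuousOn (rlDeriv α z) (Set.Ici 0))
    (hy : ∀ t ≥ (0:ℝ), deriv y t + lam * (y t + γ * rlDeriv α y t) = f t)
    (hz : ∀ t ≥ (0:ℝ), deriv z t + lam * (z t + γ * rlDeriv α z t) = f t)
    (hy0 : y 0 = y₀) (hz0 : z 0 = y₀) :
    ∀ t ≥ (0:ℝ), y t = z t := by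
  set c : ℝ := 1 / Real.Gamma (1 - α) with hc
  have hΓ : 0 < Real.Gamma (1 - α) := Real.Gamma_pos_of_pos (by linarith)
  have hc0 : 0 < c := by positivity
  set u : ℝ → ℝ := fun t => y t - z t with hu
  set W : ℝ → ℝ := fun t => rlDeriv α y t - rlDeriv α z t with hW
  have hu0 : u 0 = 0 := by simp [hu, hy0, hz0]
  have hu_diff : ∀ t ≥ (0:ℝ), DifferentiableAt ℝ u t := fun t ht =>
    (hy_diff t ht).sub (hz_diff t ht)
  have hu_cont : ContinuousOn u (Set.Ici 0) := fun x hx =>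
    ((hu_diff x hx).continuousAt).continuousWithinAt
  have hW_cont : ContinuousOn W (Set.Ici 0) := hyα_cont.sub hzα_cont
  have hu_deriv : ∀ t ≥ (0:ℝ), HasDerivAt u (-(lam * u t + lam * γ * W t)) t := by
    intro t ht
    have h1 : HasDerivAt u (deriv y t - deriv z t) t :=
      ((hy_diff t ht).hasDerivAt).sub ((hz_diff t ht).hasDerivAt)
    have h2 : deriv y t - deriv z t = -(lam * u t + lam * γ * W t) := by
      have e1 := hy t ht
      have e2 := hz t ht
      simp only [hu, hW]
      ring_nf
      ring_nf at e1 e2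
      linarith
    rwa [h2] at h1
  have hdu_eq : ∀ r ≥ (0:ℝ), deriv u r = deriv y r - deriv z r := fun r hr =>
    (((hy_diff r hr).hasDerivAt).sub ((hz_diff r hr).hasDerivAt)).deriv
  have hdu_cont : ContinuousOn (deriv u) (Set.Ici 0) :=
    (hy'_cont.sub hz'_cont).congr (fun r hr => hdu_eq r hr)
  -- key identity for ∫ W
  have KEY : ∀ t ≥ (0:ℝ), (∫ s in (0:ℝ)..t, W s)
      = c * ∫ τ in (0:ℝ)..t, (t - τ) ^ (-α) * u τ := by
    intro t ht
    rcases eq_or_lt_of_le ht with rfl | htpos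
    · simp
    have hWeq : ∀ s ∈ Set.Ioc (0:ℝ) t, W s
        = c * ∫ r in (0:ℝ)..s, (s - r) ^ (-α) * deriv u r := by
      intro s hs
      have hIy : IntervalIntegrable (fun r => (s - r) ^ (-α) * deriv y r) volume 0 s :=
        ker_mul_intervalIntegrable hα hα1 hs.1.le
          (hy'_cont.mono (Set.Icc_subset_Ici_self))
      have hIz : IntervalIntegrable (fun r => (s - r) ^ (-α) * deriv z r) volume 0 s :=
        ker_mul_intervalIntegrable hα hα1 hs.1.le
          (hz'_cont.mono (Set.Icc_subset_Ici_self))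
      have ey := rlDeriv_eq hα hα1 hy_diff hy'_cont hs.1
      have ez := rlDeriv_eq hα hα1 hz_diff hz'_cont hs.1
      have hsub : (∫ r in (0:ℝ)..s, (s - r) ^ (-α) * deriv u r)
          = (∫ r in (0:ℝ)..s, (s - r) ^ (-α) * deriv y r)
            - ∫ r in (0:ℝ)..s, (s - r) ^ (-α) * deriv z r := by
        rw [← intervalIntegral.integral_sub hIy hIz]
        apply intervalIntegral.integral_congr
        intro r hr
        rw [Set.uIcc_of_le hs.1.le] at hr
        show (s - r) ^ (-α) * deriv u r = _
        rw [hdu_eq r hr.1]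
        ring
      simp only [hW, ey, ez, hsub, hy0, hz0, hc]
      ring
    have hstar := star_identity (h := u) hα hα1 hu_diff hdu_cont htpos
    rw [hu0, zero_mul, zero_div, zero_add] at hstar
    calc (∫ s in (0:ℝ)..t, W s)
        = ∫ s in (0:ℝ)..t, c * ∫ r in (0:ℝ)..s, (s - r) ^ (-α) * deriv u r := by
          apply intervalIntegral.integral_congr_ae
          apply MeasureTheory.ae_of_all
          intro s hs
          rw [Set.uIoc_of_le ht] at hs
          exact hWeq s hs
      _ = c * ∫ s in (0:ℝ)..t, ∫ r in (0:ℝ)..s, (s - r) ^ (-α) * deriv u r :=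
          intervalIntegral.integral_const_mul _ _
      _ = c * ∫ τ in (0:ℝ)..t, (t - τ) ^ (-α) * u τ := by rw [← hstar]
  -- integral equation
  have EQN : ∀ t ≥ (0:ℝ), u t = -(lam * ∫ s in (0:ℝ)..t, u s)
      - lam * γ * c * ∫ τ in (0:ℝ)..t, (t - τ) ^ (-α) * u τ := by
    intro t ht
    have huc : ContinuousOn u (Set.uIcc 0 t) := by
      rw [Set.uIcc_of_le ht]; exact hu_cont.mono (Set.Icc_subset_Ici_self)
    have hWc : ContinuousOn W (Set.uIcc 0 t) := by
      rw [Set.uIcc_of_le ht]; exact hW_cont.mono (Set.Icc_subset_Ici_self)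
    have hint1 : IntervalIntegrable (fun s => lam * u s) volume 0 t :=
      (continuousOn_const.mul huc).intervalIntegrable
    have hint2 : IntervalIntegrable (fun s => lam * γ * W s) volume 0 t :=
      (continuousOn_const.mul hWc).intervalIntegrable
    have hftc : (∫ s in (0:ℝ)..t, (-(lam * u s + lam * γ * W s))) = u t - u 0 := by
      refine intervalIntegral.integral_eq_sub_of_hasDerivAt (fun s hs => ?_) ?_
      · rw [Set.uIcc_of_le ht] at hs
        exact hu_deriv s hs.1
      · exact (hint1.add hint2).neg
    rw [hu0, sub_zero] at hftc
    rw [← hftc, intervalIntegral.integral_neg, intervalIntegral.integral_add hint1 hint2,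
      intervalIntegral.integral_const_mul, intervalIntegral.integral_const_mul,
      KEY t ht]
    ring
  -- choose δ
  set K : ℝ := lam * γ * c / (1 - α) with hK
  have hK0 : 0 < K := div_pos (by positivity) (by linarith)
  set δ : ℝ := min (1 / (4 * lam)) ((1 / (4 * K)) ^ ((1:ℝ) / (1 - α))) with hδ
  have hδ0 : 0 < δ := lt_min (by positivity) (by positivity)
  have hδmain : lam * δ + K * δ ^ (1 - α) ≤ 1 / 2 := by
    have h1 : lam * δ ≤ 1 / 4 := by
      have hmin := min_le_left (1 / (4 * lam)) ((1 / (4 * K)) ^ ((1:ℝ) / (1 - α)))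
      rw [← hδ] at hmin
      calc lam * δ ≤ lam * (1 / (4 * lam)) := mul_le_mul_of_nonneg_left hmin hlam.le
        _ = 1 / 4 := by field_simp
    have h2 : K * δ ^ (1 - α) ≤ 1 / 4 := by
      have hle : δ ≤ (1 / (4 * K)) ^ ((1:ℝ) / (1 - α)) := by
        rw [hδ]; exact min_le_right _ _
      have hmono : δ ^ (1 - α) ≤ ((1 / (4 * K)) ^ ((1:ℝ) / (1 - α))) ^ (1 - α) :=
        Real.rpow_le_rpow hδ0.le hle (by linarith)
      have hcollapse : ((1 / (4 * K)) ^ ((1:ℝ) / (1 - α))) ^ (1 - α) = 1 / (4 * K) := by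
        rw [← Real.rpow_mul (by positivity),
          show ((1:ℝ) / (1 - α)) * (1 - α) = 1 from
            one_div_mul_cancel (by linarith : (1:ℝ) - α ≠ 0),
          Real.rpow_one]
      calc K * δ ^ (1 - α) ≤ K * (1 / (4 * K)) := by
            refine mul_le_mul_of_nonneg_left ?_ hK0.le
            rw [← hcollapse]; exact hmono
        _ = 1 / 4 := by field_simp
    linarith
  -- induction
  have MAIN : ∀ n : ℕ, ∀ s : ℝ, 0 ≤ s → s ≤ n * δ → u s = 0 := by
    intro n
    induction n with
    | zero =>
        intro s hs0 hs1
        simp only [Nat.cast_zero, zero_mul] at hs1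
        rw [le_antisymm hs1 hs0, hu0]
    | succ n ih =>
        intro s hs0 hsn
        set a : ℝ := n * δ with ha
        have ha0 : 0 ≤ a := by positivity
        by_cases hsa : s ≤ a
        · exact ih s hs0 hsa
        push_neg at hsa
        have hsmem : s ∈ Set.Icc a (a + δ) := by
          refine ⟨hsa.le, ?_⟩
          push_cast at hsn
          rw [ha]
          linarith
        obtain ⟨x₀, hx₀mem, hx₀max⟩ := (isCompact_Icc (a := a) (b := a + δ)).exists_isMaxOn
          (Set.nonempty_Icc.mpr (by linarith)) ((hu_cont.mono (fun r hr =>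
            le_trans ha0 hr.1)).abs)
        set M : ℝ := |u x₀| with hM
        have hM0 : 0 ≤ M := abs_nonneg _
        have hbound : ∀ r ∈ Set.Icc a (a + δ), |u r| ≤ M := fun r hr => hx₀max hr
        have hx₀0 : 0 ≤ x₀ := le_trans ha0 hx₀mem.1
        have hax₀ : a ≤ x₀ := hx₀mem.1
        have hx₀δ : x₀ - a ≤ δ := by linarith [hx₀mem.2]
        have hzero : ∀ r, 0 ≤ r → r ≤ a → u r = 0 := fun r h1 h2 => ih r h1 h2
        have hucIcc : ContinuousOn u (Set.Icc 0 x₀) := hu_cont.mono Set.Icc_subset_Ici_self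
        have hIu : IntervalIntegrable u volume 0 x₀ := by
          apply ContinuousOn.intervalIntegrable
          rwa [Set.uIcc_of_le hx₀0]
        have hIker : IntervalIntegrable (fun τ => (x₀ - τ) ^ (-α) * u τ) volume 0 x₀ :=
          ker_mul_intervalIntegrable hα hα1 hx₀0 hucIcc
        have hsub1 : Set.uIcc 0 a ⊆ Set.uIcc 0 x₀ := by
          rw [Set.uIcc_of_le ha0, Set.uIcc_of_le hx₀0]
          exact Set.Icc_subset_Icc le_rfl hax₀
        have hsub2 : Set.uIcc a x₀ ⊆ Set.uIcc 0 x₀ := by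
          rw [Set.uIcc_of_le hax₀, Set.uIcc_of_le hx₀0]
          exact Set.Icc_subset_Icc ha0 le_rfl
        have hsplit1 : (∫ τ in (0:ℝ)..x₀, u τ) = ∫ τ in a..x₀, u τ := by
          have hadd := intervalIntegral.integral_add_adjacent_intervals
            (hIu.mono_set hsub1) (hIu.mono_set hsub2)
          have hz1 : (∫ τ in (0:ℝ)..a, u τ) = 0 := by
            rw [intervalIntegral.integral_congr (g := fun _ => (0:ℝ)) (fun r hr => by
              rw [Set.uIcc_of_le ha0] at hr
              exact hzero r hr.1 hr.2)]
            simp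
          rw [← hadd, hz1, zero_add]
        have hsplit2 : (∫ τ in (0:ℝ)..x₀, (x₀ - τ) ^ (-α) * u τ)
            = ∫ τ in a..x₀, (x₀ - τ) ^ (-α) * u τ := by
          have hadd := intervalIntegral.integral_add_adjacent_intervals
            (hIker.mono_set hsub1) (hIker.mono_set hsub2)
          have hz1 : (∫ τ in (0:ℝ)..a, (x₀ - τ) ^ (-α) * u τ) = 0 := by
            rw [intervalIntegral.integral_congr (g := fun _ => (0:ℝ)) (fun r hr => by
              rw [Set.uIcc_of_le ha0] at hr
              show (x₀ - r) ^ (-α) * u r = 0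
              rw [hzero r hr.1 hr.2, mul_zero])]
            simp
          rw [← hadd, hz1, zero_add]
        have hest1 : |∫ τ in a..x₀, u τ| ≤ M * δ := by
          have hn := intervalIntegral.norm_integral_le_of_norm_le_const (C := M)
            (f := u) (a := a) (b := x₀) (fun r hr => by
              rw [Set.uIoc_of_le hax₀] at hr
              rw [Real.norm_eq_abs]
              exact hbound r ⟨hr.1.le, by linarith [hr.2]⟩)
          rw [Real.norm_eq_abs] at hn
          refine hn.trans ?_
          rw [abs_of_nonneg (by linarith)]
          exact mul_le_mul_of_nonneg_left (by linarith) hM0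
        have hest2 : |∫ τ in a..x₀, (x₀ - τ) ^ (-α) * u τ|
            ≤ M * (δ ^ (1 - α) / (1 - α)) := by
          have h1 := ker_mul_norm_le hα hα1 hax₀ hM0 (fun r hr =>
            hbound r ⟨hr.1.le, by linarith [hr.2]⟩)
          refine h1.trans (mul_le_mul_of_nonneg_left ?_ hM0)
          exact (div_le_div_iff_of_pos_right (by linarith)).mpr
            (Real.rpow_le_rpow (by linarith) hx₀δ (by linarith))
        have hMle : M ≤ M * (1 / 2) := by
          have heqn := EQN x₀ hx₀0
          rw [hsplit1, hsplit2] at heqn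
          have habs : M ≤ lam * (M * δ) + lam * γ * c * (M * (δ ^ (1 - α) / (1 - α))) := by
            calc M = |(-(lam * ∫ τ in a..x₀, u τ))
                  - lam * γ * c * ∫ τ in a..x₀, (x₀ - τ) ^ (-α) * u τ| := by
                  rw [hM, heqn]
              _ ≤ |lam * ∫ τ in a..x₀, u τ|
                  + |lam * γ * c * ∫ τ in a..x₀, (x₀ - τ) ^ (-α) * u τ| := by
                  rw [sub_eq_add_neg]
                  refine (abs_add_le _ _).trans ?_
                  rw [abs_neg, abs_neg]
              _ ≤ lam * (M * δ) + lam * γ * c * (M * (δ ^ (1 - α) / (1 - α))) := by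
                  rw [abs_mul, abs_mul, abs_of_pos hlam,
                    abs_of_pos (show (0:ℝ) < lam * γ * c by positivity)]
                  exact add_le_add
                    (mul_le_mul_of_nonneg_left hest1 hlam.le)
                    (mul_le_mul_of_nonneg_left hest2 (by positivity))
          calc M ≤ lam * (M * δ) + lam * γ * c * (M * (δ ^ (1 - α) / (1 - α))) := habs
            _ = M * (lam * δ + K * δ ^ (1 - α)) := by
                rw [hK]; field_simp
            _ ≤ M * (1 / 2) := mul_le_mul_of_nonneg_left hδmain hM0
        have hMzero : M = 0 := by nlinarith
        have hfin : |u s| ≤ 0 := by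
          rw [← hMzero]
          exact hbound s hsmem
        exact abs_eq_zero.mp (le_antisymm hfin (abs_nonneg _))
  -- conclude
  intro t ht
  obtain ⟨n, hn⟩ := exists_nat_ge (t / δ)
  have htn : t ≤ n * δ := by
    rw [div_le_iff₀ hδ0] at hn
    linarith
  have hfin := MAIN n t ht htn
  have : y t - z t = 0 := hfin
  linarith
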